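/- arXiv:0903.5079 — 2 statements merged into one kernel-verified Lean document; each statement's English description precedes it below -/
import Mathlib

section
/- The number of plane partitions ℓ with volume v satisfies log N(v) = O(v^{2/3}); more precisely, there is a constant C such that N(v) ≤ exp(C · (v^{2/3} + 1)) for all v ≥ 0. -/
/-- A plane partition: a map `ℕ × ℕ → ℕ` which is weakly decreasing in each coordinate
and has finite support. -/
def IsPlanePartition (ℓ : ℕ × ℕ → ℕ) : Prop :=
  (∀ x y : ℕ, ℓ (x + 1, y) ≤ ℓ (x, y)) ∧
  (∀ x y : ℕ, ℓ (x, y + 1) ≤ ℓ (x, y)) ∧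
  (Set.Finite {p : ℕ × ℕ | ℓ p ≠ 0})

/-- The volume of a plane partition: the (finite) sum of all its heights. -/
noncomputable def ppVolume (ℓ : ℕ × ℕ → ℕ) : ℕ := ∑ᶠ p : ℕ × ℕ, ℓ p

/-- The number of plane partitions of volume `v`. -/
noncomputable def numPP (v : ℕ) : ℕ :=
  Nat.card {ℓ : ℕ × ℕ → ℕ // IsPlanePartition ℓ ∧ ppVolume ℓ = v}

set_option maxHeartbeats 1000000

open Finset

namespace PPP

lemma tele (f : ℕ → ℕ) (hf : ∀ x, f (x+1) ≤ f x) :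
    ∀ n : ℕ, (∑ x ∈ Finset.range n, (x+1) * (f x - f (x+1))) + n * f n = ∑ x ∈ Finset.range n, f x := by
  intro n
  induction n with
  | zero => simp
  | succ n ih =>
    rw [Finset.sum_range_succ, Finset.sum_range_succ]
    calc (∑ x ∈ Finset.range n, (x+1) * (f x - f (x+1))) + (n+1) * (f n - f (n+1)) + (n+1) * f (n+1)
        = (∑ x ∈ Finset.range n, (x+1) * (f x - f (x+1))) + ((n+1) * ((f n - f (n+1)) + f (n+1))) := by ring
      _ = (∑ x ∈ Finset.range n, (x+1) * (f x - f (x+1))) + ((n+1) * f n) := by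
            rw [Nat.sub_add_cancel (hf n)]
      _ = ((∑ x ∈ Finset.range n, (x+1) * (f x - f (x+1))) + n * f n) + f n := by ring
      _ = (∑ x ∈ Finset.range n, f x) + f n := by rw [ih]

def wt (p : ℕ × ℕ) : ℕ := p.1 + p.2 + 2

def cf (ℓ : ℕ × ℕ → ℕ) (p : ℕ × ℕ) : ℕ :=
  ℓ p - max (ℓ (p.1+1, p.2)) (ℓ (p.1, p.2+1))

section PP

variable {ℓ : ℕ × ℕ → ℕ} (h : IsPlanePartition ℓ) {v : ℕ} (hv : ppVolume ℓ = v)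

include h

lemma mono_x : ∀ (d x y : ℕ), ℓ (x + d, y) ≤ ℓ (x, y) := by
  intro d
  induction d with
  | zero => simp
  | succ n ih =>
    intro x y
    calc ℓ (x + (n+1), y) = ℓ ((x+n) + 1, y) := by ring_nf
    _ ≤ ℓ (x + n, y) := h.1 _ _
    _ ≤ ℓ (x, y) := ih x y

lemma mono_y : ∀ (d x y : ℕ), ℓ (x, y + d) ≤ ℓ (x, y) := by
  intro d
  induction d with
  | zero => simp
  | succ n ih =>
    intro x y
    calc ℓ (x, y + (n+1)) = ℓ (x, (y+n) + 1) := by ring_nf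
    _ ≤ ℓ (x, y + n) := h.2.1 _ _
    _ ≤ ℓ (x, y) := ih x y

lemma mono_x' {t x : ℕ} (y : ℕ) (ht : t ≤ x) : ℓ (x, y) ≤ ℓ (t, y) := by
  have := mono_x h (x - t) t y
  rwa [show t + (x - t) = x by omega] at this

lemma mono_y' (x : ℕ) {t y : ℕ} (ht : t ≤ y) : ℓ (x, y) ≤ ℓ (x, t) := by
  have := mono_y h (y - t) x t
  rwa [show t + (y - t) = y by omega] at this

lemma hfs : (Function.support ℓ).Finite := h.2.2

include hv

lemma vanish : ∀ x y : ℕ, (v ≤ x ∨ v ≤ y) → ℓ (x, y) = 0 := by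
  intro x y hxy
  by_contra hne
  have hvol : ∑ᶠ p : ℕ × ℕ, ℓ p = v := hv
  rw [finsum_eq_sum ℓ (hfs h)] at hvol
  have key : ∀ (s : Finset (ℕ × ℕ)), (∀ p ∈ s, 1 ≤ ℓ p) → s.card ≤ v := by
    intro s hs
    calc s.card = ∑ p ∈ s, 1 := by simp
    _ ≤ ∑ p ∈ s, ℓ p := Finset.sum_le_sum hs
    _ ≤ ∑ p ∈ (hfs h).toFinset, ℓ p := by
        apply Finset.sum_le_sum_of_subset_of_nonneg
        · intro p hp
          simp only [Set.Finite.mem_toFinset, Function.mem_support]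
          have := hs p hp; omega
        · intros; exact Nat.zero_le _
    _ = v := hvol
  rcases hxy with hx | hy
  · have := key ((Finset.range (x+1)).image (fun t => ((t, y) : ℕ × ℕ))) ?_
    · rw [Finset.card_image_of_injective _ (by intro a b hab; simpa using hab)] at this
      simp at this; omega
    · intro p hp
      simp only [Finset.mem_image, Finset.mem_range] at hp
      obtain ⟨t, ht, rfl⟩ := hp
      have := mono_x' h y (show t ≤ x by omega)
      omega
  · have := key ((Finset.range (y+1)).image (fun t => ((x, t) : ℕ × ℕ))) ?_
    · rw [Finset.card_image_of_injective _ (by intro a b hab; simpa using hab)] at this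
      simp at this; omega
    · intro p hp
      simp only [Finset.mem_image, Finset.mem_range] at hp
      obtain ⟨t, ht, rfl⟩ := hp
      have := mono_y' h x (show t ≤ y by omega)
      omega

lemma vol_eq_grid : ∑ p ∈ (Finset.range v ×ˢ Finset.range v), ℓ p = v := by
  have hvol : ∑ᶠ p : ℕ × ℕ, ℓ p = v := hv
  rw [finsum_eq_sum ℓ (hfs h)] at hvol
  rw [← hvol]
  symm
  apply Finset.sum_subset
  · intro p hp
    simp only [Set.Finite.mem_toFinset, Function.mem_support] at hp
    simp only [Finset.mem_product, Finset.mem_range]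
    constructor
    · by_contra h1
      exact hp (vanish h hv p.1 p.2 (Or.inl (by omega)))
    · by_contra h1
      exact hp (vanish h hv p.1 p.2 (Or.inr (by omega)))
  · intro p _ hp
    simp only [Set.Finite.mem_toFinset, Function.mem_support] at hp
    simpa using hp

lemma recon (x y : ℕ) : ℓ (x, y) = cf ℓ (x, y) + max (ℓ (x+1, y)) (ℓ (x, y+1)) := by
  have hm : max (ℓ (x+1, y)) (ℓ (x, y+1)) ≤ ℓ (x, y) := max_le (h.1 x y) (h.2.1 x y)
  unfold cf
  dsimp only
  omega

lemma cf_le_dx (x y : ℕ) : cf ℓ (x, y) ≤ ℓ (x, y) - ℓ (x+1, y) :=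
  Nat.sub_le_sub_left (le_max_left _ _) _

lemma cf_le_dy (x y : ℕ) : cf ℓ (x, y) ≤ ℓ (x, y) - ℓ (x, y+1) :=
  Nat.sub_le_sub_left (le_max_right _ _) _

lemma cf_off_grid (x y : ℕ) (hxy : v ≤ x ∨ v ≤ y) : cf ℓ (x, y) = 0 := by
  have h0 : ℓ (x, y) = 0 := vanish h hv x y hxy
  unfold cf
  dsimp only
  omega

lemma weight_half_x :
    ∑ p ∈ (Finset.range v ×ˢ Finset.range v), cf ℓ p * (p.1 + 1) ≤ v := by
  rw [Finset.sum_product]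
  have swap : ∑ x ∈ Finset.range v, ∑ y ∈ Finset.range v, cf ℓ (x, y) * (x+1)
      = ∑ y ∈ Finset.range v, ∑ x ∈ Finset.range v, cf ℓ (x, y) * (x+1) := Finset.sum_comm
  rw [swap]
  have hle : ∀ y ∈ Finset.range v, ∑ x ∈ Finset.range v, cf ℓ (x, y) * (x+1)
      ≤ ∑ x ∈ Finset.range v, ℓ (x, y) := by
    intro y _
    have t := tele (fun x => ℓ (x, y)) (fun x => h.1 x y) v
    calc ∑ x ∈ Finset.range v, cf ℓ (x, y) * (x+1)
        ≤ ∑ x ∈ Finset.range v, (x+1) * (ℓ (x, y) - ℓ (x+1, y)) := by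
          apply Finset.sum_le_sum
          intro x _
          rw [Nat.mul_comm]
          exact Nat.mul_le_mul_left _ (cf_le_dx h hv x y)
      _ ≤ (∑ x ∈ Finset.range v, (x+1) * (ℓ (x, y) - ℓ (x+1, y))) + v * ℓ (v, y) := Nat.le_add_right _ _
      _ = ∑ x ∈ Finset.range v, ℓ (x, y) := t
  calc ∑ y ∈ Finset.range v, ∑ x ∈ Finset.range v, cf ℓ (x, y) * (x+1)
      ≤ ∑ y ∈ Finset.range v, ∑ x ∈ Finset.range v, ℓ (x, y) := Finset.sum_le_sum hle
    _ = ∑ x ∈ Finset.range v, ∑ y ∈ Finset.range v, ℓ (x, y) := Finset.sum_comm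
    _ = ∑ p ∈ (Finset.range v ×ˢ Finset.range v), ℓ p := (Finset.sum_product ..).symm
    _ = v := vol_eq_grid h hv

lemma weight_half_y :
    ∑ p ∈ (Finset.range v ×ˢ Finset.range v), cf ℓ p * (p.2 + 1) ≤ v := by
  rw [Finset.sum_product]
  have hle : ∀ x ∈ Finset.range v, ∑ y ∈ Finset.range v, cf ℓ (x, y) * (y+1)
      ≤ ∑ y ∈ Finset.range v, ℓ (x, y) := by
    intro x _
    have t := tele (fun y => ℓ (x, y)) (fun y => h.2.1 x y) v
    calc ∑ y ∈ Finset.range v, cf ℓ (x, y) * (y+1)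
        ≤ ∑ y ∈ Finset.range v, (y+1) * (ℓ (x, y) - ℓ (x, y+1)) := by
          apply Finset.sum_le_sum
          intro y _
          rw [Nat.mul_comm]
          exact Nat.mul_le_mul_left _ (cf_le_dy h hv x y)
      _ ≤ (∑ y ∈ Finset.range v, (y+1) * (ℓ (x, y) - ℓ (x, y+1))) + v * ℓ (x, v) := Nat.le_add_right _ _
      _ = ∑ y ∈ Finset.range v, ℓ (x, y) := t
  calc ∑ x ∈ Finset.range v, ∑ y ∈ Finset.range v, cf ℓ (x, y) * (y+1)
      ≤ ∑ x ∈ Finset.range v, ∑ y ∈ Finset.range v, ℓ (x, y) := Finset.sum_le_sum hle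
    _ = ∑ p ∈ (Finset.range v ×ˢ Finset.range v), ℓ p := (Finset.sum_product ..).symm
    _ = v := vol_eq_grid h hv

lemma weight_bound :
    ∑ p ∈ (Finset.range v ×ˢ Finset.range v), cf ℓ p * wt p ≤ 2 * v := by
  have hw : ∀ p : ℕ × ℕ, cf ℓ p * wt p = cf ℓ p * (p.1 + 1) + cf ℓ p * (p.2 + 1) := by
    intro p; unfold wt; ring
  rw [Finset.sum_congr rfl (fun p _ => hw p), Finset.sum_add_distrib]
  have h1 := weight_half_x h hv
  have h2 := weight_half_y h hv
  omega

end PP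

def Scl (i : ℕ) : Finset (ℕ × ℕ) :=
  ((Finset.range (2^(i+1))) ×ˢ (Finset.range (2^(i+1)))).filter
    (fun p => 2^i ≤ wt p ∧ wt p < 2^(i+1))

def mcl (i : ℕ) : ℕ := (Scl i).card

def LL (v : ℕ) : ℕ := Nat.log 2 (2*v)

def nb (v i : ℕ) : ℕ := (2*v) / 2^i

lemma mcl_le (i : ℕ) : mcl i ≤ 4^(i+1) := by
  unfold mcl
  calc (Scl i).card ≤ ((Finset.range (2^(i+1))) ×ˢ (Finset.range (2^(i+1)))).card :=
        Finset.card_filter_le _ _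
    _ = 2^(i+1) * 2^(i+1) := by rw [Finset.card_product, Finset.card_range]
    _ = 4^(i+1) := by rw [← Nat.mul_pow]

lemma mcl_ge {i : ℕ} (hi : 1 ≤ i) : 4^i ≤ 4 * mcl i := by
  have h2 : (2:ℕ)^i ≥ 2 := by
    calc (2:ℕ)^i ≥ 2^1 := Nat.pow_le_pow_right (by norm_num) hi
    _ = 2 := by norm_num
  have key : 4^(i-1) ≤ mcl i := by
    unfold mcl
    have := Finset.card_le_card_of_injOn
      (f := fun q : ℕ × ℕ => ((q.1, q.2 + 2^i - 2) : ℕ × ℕ))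
      (s := (Finset.range (2^(i-1))) ×ˢ (Finset.range (2^(i-1))))
      (t := Scl i) ?_ ?_
    · calc 4^(i-1) = 2^(i-1) * 2^(i-1) := by rw [← Nat.mul_pow]
        _ = ((Finset.range (2^(i-1))) ×ˢ (Finset.range (2^(i-1)))).card := by
            rw [Finset.card_product, Finset.card_range]
        _ ≤ (Scl i).card := this
    · intro q hq
      simp only [Finset.coe_product, Set.mem_prod, Finset.mem_coe, Finset.mem_range] at hq
      obtain ⟨ha, hb⟩ := hq
      have hpow : (2:ℕ)^(i-1) + 2^(i-1) = 2^i := by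
        have : i - 1 + 1 = i := by omega
        calc (2:ℕ)^(i-1) + 2^(i-1) = 2^(i-1) * 2 := by ring
        _ = 2^(i-1+1) := by rw [Nat.pow_succ]
        _ = 2^i := by rw [this]
      have hpow2 : (2:ℕ)^i + 2^i = 2^(i+1) := by
        calc (2:ℕ)^i + 2^i = 2^i * 2 := by ring
        _ = 2^(i+1) := by rw [Nat.pow_succ]
      simp only [Scl, Finset.mem_coe, Finset.mem_filter, Finset.mem_product, Finset.mem_range]
      unfold wt
      dsimp only
      refine ⟨⟨by omega, by omega⟩, by omega, by omega⟩
    · intro a _ b _ hab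
      simp only [Prod.mk.injEq] at hab
      have : a.1 = b.1 := hab.1
      have : a.2 = b.2 := by have := hab.2; omega
      exact Prod.ext hab.1 this
  calc 4^i = 4 * 4^(i-1) := by
        rw [← Nat.pow_succ']
        congr 1
        omega
    _ ≤ 4 * mcl i := by omega

section PP2

variable {ℓ : ℕ × ℕ → ℕ} (h : IsPlanePartition ℓ) {v : ℕ} (hv : ppVolume ℓ = v)

include h hv

lemma class_sum (i : ℕ) : ∑ p ∈ Scl i, cf ℓ p ≤ nb v i := by
  rw [nb, Nat.le_div_iff_mul_le (by positivity : (0:ℕ) < 2^i)]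
  set grid := (Finset.range v ×ˢ Finset.range v) with hg
  have step1 : ∑ p ∈ Scl i, cf ℓ p = ∑ p ∈ Scl i ∩ grid, cf ℓ p := by
    symm
    apply Finset.sum_subset (Finset.inter_subset_left)
    intro p hp hnp
    have : p ∉ grid := fun hgp => hnp (Finset.mem_inter.mpr ⟨hp, hgp⟩)
    simp only [hg, Finset.mem_product, Finset.mem_range] at this
    push_neg at this
    rcases Nat.lt_or_ge p.1 v with h1 | h1
    · exact cf_off_grid h hv p.1 p.2 (Or.inr (this h1))
    · exact cf_off_grid h hv p.1 p.2 (Or.inl h1)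
  rw [step1]
  calc (∑ p ∈ Scl i ∩ grid, cf ℓ p) * 2^i = ∑ p ∈ Scl i ∩ grid, cf ℓ p * 2^i := by
        rw [Finset.sum_mul]
    _ ≤ ∑ p ∈ Scl i ∩ grid, cf ℓ p * wt p := by
        apply Finset.sum_le_sum
        intro p hp
        have hp' : p ∈ Scl i := Finset.mem_inter.mp hp |>.1
        simp only [Scl, Finset.mem_filter] at hp'
        exact Nat.mul_le_mul_left _ hp'.2.1
    _ ≤ ∑ p ∈ grid, cf ℓ p * wt p := by
        apply Finset.sum_le_sum_of_subset_of_nonneg (Finset.inter_subset_right)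
        intros; exact Nat.zero_le _
    _ ≤ 2 * v := weight_bound h hv

end PP2


noncomputable def clMul (ℓ : ℕ × ℕ → ℕ) (v i : ℕ) : Multiset (Option ↥(Scl i)) :=
  Multiset.replicate (nb v i - ∑ p ∈ Scl i, cf ℓ p) none +
    ∑ p ∈ (Scl i).attach, Multiset.replicate (cf ℓ ↑p) (some p)

lemma clMul_count (ℓ : ℕ × ℕ → ℕ) (v i : ℕ) (q : ↥(Scl i)) :
    Multiset.count (some q) (clMul ℓ v i) = cf ℓ ↑q := by
  unfold clMul
  rw [Multiset.count_add, Multiset.count_replicate]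
  simp only [reduceCtorEq, if_false]
  rw [Multiset.count_sum']
  rw [Finset.sum_eq_single q]
  · rw [Multiset.count_replicate]
    simp
  · intro b _ hbq
    rw [Multiset.count_replicate]
    simp [hbq]
  · intro hq
    exact absurd (Finset.mem_attach _ q) hq

section PP3

variable {ℓ : ℕ × ℕ → ℕ} (h : IsPlanePartition ℓ) {v : ℕ} (hv : ppVolume ℓ = v)

include h hv

lemma clMul_card (i : ℕ) : Multiset.card (clMul ℓ v i) = nb v i := by
  unfold clMul
  rw [Multiset.card_add, Multiset.card_replicate, Multiset.card_sum]
  have : ∑ p ∈ (Scl i).attach, Multiset.card (Multiset.replicate (cf ℓ ↑p) (some p))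
      = ∑ p ∈ (Scl i).attach, cf ℓ ↑p := by
    apply Finset.sum_congr rfl
    intro p _
    rw [Multiset.card_replicate]
  rw [this, Finset.sum_attach (Scl i) (fun p => cf ℓ p)]
  have := class_sum h hv i
  omega

end PP3

abbrev PPset (v : ℕ) := {ℓ : ℕ × ℕ → ℕ // IsPlanePartition ℓ ∧ ppVolume ℓ = v}

noncomputable def Phi (v : ℕ) (L : PPset v) :
    Π i : ↥(Finset.Icc 1 (LL v)), Sym (Option ↥(Scl (i:ℕ))) (nb v (i:ℕ)) :=
  fun i => ⟨clMul L.1 v (i:ℕ), clMul_card L.2.1 L.2.2 (i:ℕ)⟩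


lemma phi_inj (v : ℕ) : Function.Injective (Phi v) := by
  intro L L' heq
  obtain ⟨ℓ, h, hv⟩ := L
  obtain ⟨ℓ', h', hv'⟩ := L'
  simp only [Subtype.mk.injEq]
  -- step 1 : the cf functions agree
  have ceq : ∀ p : ℕ × ℕ, cf ℓ p = cf ℓ' p := by
    intro p
    rcases Nat.lt_or_ge (2*v) (wt p) with hbig | hsmall
    · -- both vanish
      have hp : v ≤ p.1 ∨ v ≤ p.2 := by unfold wt at hbig; omega
      rcases hp with h1 | h1
      · rw [cf_off_grid h hv p.1 p.2 (Or.inl h1), cf_off_grid h' hv' p.1 p.2 (Or.inl h1)]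
      · rw [cf_off_grid h hv p.1 p.2 (Or.inr h1), cf_off_grid h' hv' p.1 p.2 (Or.inr h1)]
    · -- p belongs to a class i ∈ [1, LL v]
      have hwt2 : 2 ≤ wt p := by unfold wt; omega
      have hwt0 : wt p ≠ 0 := by omega
      set i := Nat.log 2 (wt p) with hi
      have hi1 : 1 ≤ i := by
        rw [hi, Nat.le_log_iff_pow_le (by norm_num) hwt0]
        simpa using hwt2
      have hiL : i ≤ LL v := Nat.log_mono_right hsmall
      have hlow : 2^i ≤ wt p := Nat.pow_log_le_self 2 hwt0
      have hhigh : wt p < 2^(i+1) := Nat.lt_pow_succ_log_self (by norm_num) _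
      have hmem : p ∈ Scl i := by
        simp only [Scl, Finset.mem_filter, Finset.mem_product, Finset.mem_range]
        unfold wt at hlow hhigh ⊢
        exact ⟨⟨by omega, by omega⟩, by omega, by omega⟩
      have hiIcc : i ∈ Finset.Icc 1 (LL v) := Finset.mem_Icc.mpr ⟨hi1, hiL⟩
      have hcomp := congrFun heq ⟨i, hiIcc⟩
      have hmul : clMul ℓ v i = clMul ℓ' v i := congrArg Subtype.val hcomp
      have := congrArg (Multiset.count (some (⟨p, hmem⟩ : ↥(Scl i)))) hmul
      rwa [clMul_count, clMul_count] at this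
  -- step 2 : downward induction
  have main : ∀ n : ℕ, ∀ x y : ℕ, 2*v - (x + y) ≤ n → ℓ (x, y) = ℓ' (x, y) := by
    intro n
    induction n with
    | zero =>
      intro x y hxy
      have : v ≤ x ∨ v ≤ y := by omega
      rw [vanish h hv x y this, vanish h' hv' x y this]
    | succ n ih =>
      intro x y hxy
      rcases Nat.lt_or_ge (x + y) (2*v) with hlt | hge
      · have e1 : ℓ (x+1, y) = ℓ' (x+1, y) := ih (x+1) y (by omega)
        have e2 : ℓ (x, y+1) = ℓ' (x, y+1) := ih x (y+1) (by omega)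
        rw [recon h hv x y, recon h' hv' x y, ceq (x, y), e1, e2]
      · have : v ≤ x ∨ v ≤ y := by omega
        rw [vanish h hv x y this, vanish h' hv' x y this]
  funext p
  obtain ⟨x, y⟩ := p
  exact main (2*v) x y (by omega)


lemma numPP_le_prod (v : ℕ) :
    Nat.card (PPset v) ≤ ∏ i ∈ Finset.Icc 1 (LL v), (mcl i + nb v i).choose (nb v i) := by
  have step := Nat.card_le_card_of_injective (Phi v) (phi_inj v)
  rw [Nat.card_eq_fintype_card (α := Π i : ↥(Finset.Icc 1 (LL v)),
    Sym (Option ↥(Scl (i:ℕ))) (nb v (i:ℕ)))] at step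
  refine le_trans step ?_
  rw [Fintype.card_pi]
  apply le_of_eq
  have e1 : ∀ i : ↥(Finset.Icc 1 (LL v)),
      Fintype.card (Sym (Option ↥(Scl (i:ℕ))) (nb v (i:ℕ)))
      = (mcl (i:ℕ) + nb v (i:ℕ)).choose (nb v (i:ℕ)) := by
    intro i
    rw [Sym.card_sym_eq_multichoose, Nat.multichoose_eq, Fintype.card_option, Fintype.card_coe]
    congr 1
    unfold mcl
    omega
  rw [Finset.prod_congr rfl (fun i _ => e1 i)]
  exact Finset.prod_coe_sort _ (fun i => (mcl i + nb v i).choose (nb v i))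




end PPP
namespace RZ

lemma geo_sum {x : ℝ} (h0 : 0 ≤ x) (h1 : x < 1) :
    ∀ n : ℕ, ∑ t ∈ Finset.range n, x^t ≤ 1/(1-x) := by
  intro n
  induction n with
  | zero =>
    simp only [Finset.sum_range_zero]
    exact div_nonneg zero_le_one (by linarith)
  | succ n ih =>
    rw [Finset.sum_range_succ']
    have hr : ∑ t ∈ Finset.range n, x^(t+1) = x * ∑ t ∈ Finset.range n, x^t := by
      rw [Finset.mul_sum]; apply Finset.sum_congr rfl; intros; ring
    rw [hr]
    simp only [pow_zero]
    have hx : x * ∑ t ∈ Finset.range n, x^t ≤ x * (1/(1-x)) :=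
      mul_le_mul_of_nonneg_left ih h0
    have h1x : (1:ℝ) - x ≠ 0 := by linarith
    have heq : x * (1/(1-x)) + 1 = 1/(1-x) := by
      field_simp
      ring
    linarith

lemma geo_lin_sum {x : ℝ} (h0 : 0 ≤ x) (h1 : x < 1) :
    ∀ n : ℕ, ∑ t ∈ Finset.range n, (t:ℝ) * x^t ≤ x/(1-x)^2 := by
  intro n
  induction n with
  | zero =>
    simp only [Finset.sum_range_zero]
    have h1x : (0:ℝ) < 1 - x := by linarith
    positivity
  | succ n ih =>
    rw [Finset.sum_range_succ']
    have e : ∀ t : ℕ, ((t:ℝ)+1) * x^(t+1) = x * ((t:ℝ) * x^t) + x * x^t := by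
      intro t; ring
    simp only [Nat.cast_add, Nat.cast_one, Nat.cast_zero, pow_zero, zero_mul, add_zero]
    calc ∑ t ∈ Finset.range n, ((t:ℝ)+1) * x^(t+1)
        = x * (∑ t ∈ Finset.range n, (t:ℝ)*x^t) + x * ∑ t ∈ Finset.range n, x^t := by
          rw [Finset.mul_sum, Finset.mul_sum, ← Finset.sum_add_distrib]
          apply Finset.sum_congr rfl; intros; ring
      _ ≤ x * (x/(1-x)^2) + x * (1/(1-x)) := by
          have g := geo_sum h0 h1 n
          have hx1 : x * (∑ t ∈ Finset.range n, (t:ℝ)*x^t) ≤ x * (x/(1-x)^2) :=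
            mul_le_mul_of_nonneg_left ih h0
          have hx2 : x * ∑ t ∈ Finset.range n, x^t ≤ x * (1/(1-x)) :=
            mul_le_mul_of_nonneg_left g h0
          linarith
      _ = x/(1-x)^2 := by
          have h1x : (1:ℝ) - x ≠ 0 := by linarith
          field_simp
          ring

lemma choose_nat_bound (m n : ℕ) : (m+n).choose n * (m^m * n^n) ≤ (m+n)^(m+n) := by
  have h := (Commute.all (m:ℕ) n).add_pow (m+n)
  have hterm : (m:ℕ)^m * n^(m+n-m) * ((m+n).choose m) ≤ (m+n)^(m+n) := by
    rw [h]
    apply Finset.single_le_sum (f := fun k => (m:ℕ)^k * n^(m+n-k) * ((m+n).choose k))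
    · intros; exact Nat.zero_le _
    · simp [Nat.lt_succ_iff]
  have hs : m + n - m = n := by omega
  rw [hs] at hterm
  have hsym : (m+n).choose m = (m+n).choose n := by
    have hcs := Nat.choose_symm (show m ≤ m + n by omega)
    rw [show m + n - m = n by omega] at hcs
    exact hcs.symm
  rw [hsym] at hterm
  calc (m+n).choose n * (m^m * n^n) = m^m * n^n * ((m+n).choose n) := by ring
  _ ≤ (m+n)^(m+n) := hterm

lemma choose_real_bound (m n : ℕ) (hm : 1 ≤ m) (hn : 1 ≤ n) :
    (((m+n).choose n : ℕ) : ℝ) ≤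
      Real.exp ((m:ℝ) * Real.log (1 + (n:ℝ)/(m:ℝ)) + (n:ℝ) * Real.log (1 + (m:ℝ)/(n:ℝ))) := by
  have hmp : (0:ℝ) < m := by exact_mod_cast hm
  have hnp : (0:ℝ) < n := by exact_mod_cast hn
  have h1 : (0:ℝ) < 1 + (n:ℝ)/(m:ℝ) := by positivity
  have h2 : (0:ℝ) < 1 + (m:ℝ)/(n:ℝ) := by positivity
  rw [Real.exp_add]
  have e1 : Real.exp ((m:ℝ) * Real.log (1 + (n:ℝ)/(m:ℝ))) = (1 + (n:ℝ)/(m:ℝ))^(m:ℕ) := by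
    rw [← Real.exp_log (x := (1 + (n:ℝ)/(m:ℝ))^(m:ℕ)) (by positivity), Real.log_pow]
  have e2 : Real.exp ((n:ℝ) * Real.log (1 + (m:ℝ)/(n:ℝ))) = (1 + (m:ℝ)/(n:ℝ))^(n:ℕ) := by
    rw [← Real.exp_log (x := (1 + (m:ℝ)/(n:ℝ))^(n:ℕ)) (by positivity), Real.log_pow]
  rw [e1, e2]
  have key : (((m+n).choose n : ℕ) : ℝ) * ((m:ℝ)^(m:ℕ) * (n:ℝ)^(n:ℕ)) ≤ ((m:ℝ)+(n:ℝ))^(m+n : ℕ) := by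
    have := choose_nat_bound m n
    have := (Nat.cast_le (α := ℝ)).mpr this
    push_cast at this ⊢
    convert this using 2 <;> push_cast <;> ring
  have hfrac : (1 + (n:ℝ)/(m:ℝ))^(m:ℕ) * (1 + (m:ℝ)/(n:ℝ))^(n:ℕ)
      = ((m:ℝ)+(n:ℝ))^(m+n:ℕ) / ((m:ℝ)^(m:ℕ) * (n:ℝ)^(n:ℕ)) := by
    have q1 : 1 + (n:ℝ)/(m:ℝ) = ((m:ℝ)+(n:ℝ))/(m:ℝ) := by field_simp
    have q2 : 1 + (m:ℝ)/(n:ℝ) = ((m:ℝ)+(n:ℝ))/(n:ℝ) := by field_simp; ring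
    rw [q1, q2, div_pow, div_pow, pow_add]
    field_simp
  rw [hfrac, le_div_iff₀ (by positivity)]
  exact key

end RZ
namespace RZ2

lemma geo4 : ∀ J : ℕ, ∑ i ∈ Finset.Icc 1 J, (4:ℝ)^i ≤ (4/3) * 4^J := by
  intro J
  induction J with
  | zero => simp; norm_num
  | succ J ih =>
    rw [show J + 1 = J + 1 from rfl, Finset.sum_Icc_succ_top (by omega)]
    have : (4:ℝ)^(J+1) = 4 * 4^J := by ring
    rw [this]
    nlinarith [pow_nonneg (by norm_num : (0:ℝ) ≤ 4) J]

lemma sum4 : ∀ J : ℕ, ∑ i ∈ Finset.Icc 1 J, (4:ℝ)^i * ((J:ℝ) + 2 - (i:ℝ)) ≤ 4 * 4^J := by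
  intro J
  induction J with
  | zero => simp
  | succ J ih =>
    have split : ∑ i ∈ Finset.Icc 1 (J+1), (4:ℝ)^i * (((J+1:ℕ):ℝ) + 2 - (i:ℝ))
        = (∑ i ∈ Finset.Icc 1 J, (4:ℝ)^i * ((J:ℝ) + 2 - (i:ℝ)))
          + (∑ i ∈ Finset.Icc 1 J, (4:ℝ)^i) + (4:ℝ)^(J+1) * 2 := by
      rw [Finset.sum_Icc_succ_top (by omega)]
      push_cast
      rw [← Finset.sum_add_distrib]
      have : ∀ i ∈ Finset.Icc 1 J, (4:ℝ)^i * ((J:ℝ) + 1 + 2 - (i:ℝ))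
          = (4:ℝ)^i * ((J:ℝ) + 2 - (i:ℝ)) + (4:ℝ)^i := by
        intro i _; ring
      rw [Finset.sum_congr rfl this]
      push_cast
      ring
    rw [split]
    have g := geo4 J
    have h4 : (4:ℝ)^(J+1) = 4 * 4^J := by ring
    nlinarith [pow_nonneg (by norm_num : (0:ℝ) ≤ 4) J]

-- better: strengthened forms
lemma geo2' (J : ℕ) : ∀ d : ℕ,
    (∑ i ∈ Finset.Icc (J+1) (J+d), ((1:ℝ)/2)^i) + (1/2)^(J+d) ≤ (1/2)^J := by
  intro d
  induction d with
  | zero => simp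
  | succ d ih =>
    rw [show J + (d+1) = (J + d) + 1 by omega, Finset.sum_Icc_succ_top (by omega)]
    have : ((1:ℝ)/2)^(J+d+1) + (1/2)^(J+d+1) = (1/2)^(J+d) := by ring
    linarith

lemma geo3' (J : ℕ) : ∀ d : ℕ,
    (∑ i ∈ Finset.Icc (J+1) (J+d), ((1:ℝ)/2)^i * ((i:ℝ) - (J:ℝ) + 2))
      + ((d:ℝ) + 4) * (1/2)^(J+d) ≤ 4 * (1/2)^J := by
  intro d
  induction d with
  | zero => simp
  | succ d ih =>
    rw [show J + (d+1) = (J + d) + 1 by omega, Finset.sum_Icc_succ_top (by omega)]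
    have e1 : ((1:ℝ)/2)^(J+d+1) * (((J+d+1:ℕ):ℝ) - (J:ℝ) + 2)
        + (((d+1:ℕ):ℝ) + 4) * (1/2)^(J+d+1) = ((d:ℝ) + 4) * (1/2)^(J+d) := by
      push_cast
      ring
    push_cast at e1 ⊢
    linarith

end RZ2
namespace PPP
open RZ RZ2

noncomputable def Ac (v i : ℕ) : ℝ := 4 * 4^i * Real.log (1 + 8*(v:ℝ) / 8^i)

noncomputable def Bc (v i : ℕ) : ℝ := (2*(v:ℝ)/2^i) * Real.log (1 + 8 * 8^i / (2*(v:ℝ)))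

lemma cost_class (v : ℕ) (hv : 1 ≤ v) (i : ℕ) (hi : i ∈ Finset.Icc 1 (LL v)) :
    ((mcl i + nb v i).choose (nb v i) : ℝ) ≤ Real.exp (Ac v i + Bc v i) := by
  obtain ⟨hi1, hiL⟩ := Finset.mem_Icc.mp hi
  have h2v : (2*v) ≠ 0 := by omega
  have hpowL : 2^i ≤ 2*v :=
    le_trans (Nat.pow_le_pow_right (by norm_num) hiL) (Nat.pow_log_le_self 2 h2v)
  have hn1 : 1 ≤ nb v i := by
    unfold nb
    rw [Nat.le_div_iff_mul_le (by positivity : (0:ℕ) < 2^i), one_mul]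
    exact hpowL
  have hm4 : 4^i ≤ 4 * mcl i := mcl_ge hi1
  have hm1 : 1 ≤ mcl i := by
    have : 1 ≤ 4^i := Nat.one_le_pow _ _ (by norm_num)
    omega
  have hmle : mcl i ≤ 4 * 4^i := by
    have h1 := mcl_le i
    have h2 : (4:ℕ)^(i+1) = 4 * 4^i := by rw [Nat.pow_succ]; ring
    omega
  -- real abbreviations
  set m := mcl i with hm
  set n := nb v i with hn
  have hmR : (1:ℝ) ≤ (m:ℝ) := by exact_mod_cast hm1
  have hnR : (1:ℝ) ≤ (n:ℝ) := by exact_mod_cast hn1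
  have hP2 : (0:ℝ) < 2^i := by positivity
  have hP4 : (0:ℝ) < 4^i := by positivity
  have hP8 : (0:ℝ) < 8^i := by positivity
  have hvR : (1:ℝ) ≤ (v:ℝ) := by exact_mod_cast hv
  have h84 : ((8:ℝ))^i = 2^i * 4^i := by
    rw [← mul_pow]; norm_num
  have hm4R : (4:ℝ)^i ≤ 4 * m := by exact_mod_cast hm4
  have hmleR : (m:ℝ) ≤ 4 * 4^i := by exact_mod_cast hmle
  have hn2i : (n:ℝ) * 2^i ≤ 2*(v:ℝ) := by
    have : n * 2^i ≤ 2*v := Nat.div_mul_le_self _ _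
    exact_mod_cast this
  have hnle : (n:ℝ) ≤ 2*(v:ℝ)/2^i := by
    rw [le_div_iff₀ hP2]
    exact hn2i
  have hv2n : 2*(v:ℝ) ≤ 2 * 2^i * n := by
    have h1 : 2*v < 2^i * (n + 1) := by
      have hd := Nat.div_add_mod (2*v) (2^i)
      have hmod : (2*v) % 2^i < 2^i := Nat.mod_lt _ (by positivity)
      calc 2*v = 2^i * n + (2*v) % 2^i := by rw [hn, nb, hd]
        _ < 2^i * n + 2^i := by omega
        _ = 2^i * (n+1) := by ring
    have h1R : 2*(v:ℝ) < 2^i * ((n:ℝ) + 1) := by exact_mod_cast h1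
    nlinarith
  -- ratio bounds
  have r1 : (n:ℝ)/(m:ℝ) ≤ 8*(v:ℝ)/8^i := by
    rw [div_le_div_iff₀ (by linarith) hP8]
    calc (n:ℝ) * 8^i = ((n:ℝ) * 2^i) * 4^i := by rw [h84]; ring
      _ ≤ (2*(v:ℝ)) * 4^i := by nlinarith
      _ ≤ (2*(v:ℝ)) * (4 * m) := by nlinarith
      _ = 8*(v:ℝ) * m := by ring
  have r2 : (m:ℝ)/(n:ℝ) ≤ 8 * 8^i / (2*(v:ℝ)) := by
    rw [div_le_div_iff₀ (by linarith) (by linarith)]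
    calc (m:ℝ) * (2*(v:ℝ)) ≤ (4 * 4^i) * (2 * 2^i * n) := by nlinarith
      _ = 8 * 8^i * n := by rw [h84]; ring
  -- apply the binomial bound
  have base := RZ.choose_real_bound m n hm1 hn1
  refine le_trans base (Real.exp_le_exp.mpr ?_)
  have hx1 : (0:ℝ) < 1 + (n:ℝ)/(m:ℝ) := by positivity
  have hx2 : (0:ℝ) < 1 + (m:ℝ)/(n:ℝ) := by positivity
  have l1 : Real.log (1 + (n:ℝ)/(m:ℝ)) ≤ Real.log (1 + 8*(v:ℝ)/8^i) :=
    Real.log_le_log hx1 (by linarith)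
  have l2 : Real.log (1 + (m:ℝ)/(n:ℝ)) ≤ Real.log (1 + 8*8^i/(2*(v:ℝ))) :=
    Real.log_le_log hx2 (by linarith)
  have lp1 : 0 ≤ Real.log (1 + (n:ℝ)/(m:ℝ)) := Real.log_nonneg (le_add_of_nonneg_right (by positivity))
  have lp2 : 0 ≤ Real.log (1 + (m:ℝ)/(n:ℝ)) := Real.log_nonneg (le_add_of_nonneg_right (by positivity))
  unfold Ac Bc
  have t1 : (m:ℝ) * Real.log (1 + (n:ℝ)/(m:ℝ)) ≤ 4 * 4^i * Real.log (1 + 8*(v:ℝ)/8^i) := by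
    apply mul_le_mul hmleR l1 lp1 (by positivity)
  have t2 : (n:ℝ) * Real.log (1 + (m:ℝ)/(n:ℝ))
      ≤ (2*(v:ℝ)/2^i) * Real.log (1 + 8*8^i/(2*(v:ℝ))) := by
    apply mul_le_mul hnle l2 lp2 (by positivity)
  linarith


lemma cost_sum (v : ℕ) (hv : 1 ≤ v) :
    ∑ i ∈ Finset.Icc 1 (LL v), (Ac v i + Bc v i) ≤ 100 * (2*(v:ℝ))^((2:ℝ)/3) := by
  have h2v : (2*v) ≠ 0 := by omega
  set L := LL v with hLdef
  set J := Nat.log 8 (2*v) with hJdef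
  have h8J : (8:ℕ)^J ≤ 2*v := Nat.pow_log_le_self 8 h2v
  have hlt : 2*v < 8^(J+1) := Nat.lt_pow_succ_log_self (by norm_num) _
  have hvR : (1:ℝ) ≤ (v:ℝ) := by exact_mod_cast hv
  have hWpos : (0:ℝ) < 2*(v:ℝ) := by linarith
  have h8JR : (8:ℝ)^J ≤ 2*(v:ℝ) := by exact_mod_cast h8J
  have hltR : 2*(v:ℝ) < (8:ℝ)^(J+1) := by exact_mod_cast hlt
  have hlog8eq : Real.log 8 = 3 * Real.log 2 := by
    rw [show (8:ℝ) = 2^3 by norm_num, Real.log_pow]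
    push_cast; ring
  have hlog8 : Real.log 8 ≤ 2.08 := by
    have := Real.log_two_lt_d9
    rw [hlog8eq]; linarith
  have hlog8nn : (0:ℝ) ≤ Real.log 8 := Real.log_nonneg (by norm_num)
  have hW23nn : (0:ℝ) ≤ (2*(v:ℝ))^((2:ℝ)/3) := Real.rpow_nonneg (le_of_lt hWpos) _
  -- rpow facts
  have hr4 : (4:ℝ)^J ≤ (2*(v:ℝ))^((2:ℝ)/3) := by
    have e1 : ((8:ℝ)^J)^((2:ℝ)/3) = (4:ℝ)^J := by
      have h1 : (8:ℝ)^J = (2:ℝ)^(3*J) := by rw [pow_mul]; norm_num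
      have h2 : (4:ℝ)^J = (2:ℝ)^(2*J) := by rw [pow_mul]; norm_num
      rw [h1, h2, ← Real.rpow_natCast (2:ℝ) (3*J), ← Real.rpow_natCast (2:ℝ) (2*J),
        ← Real.rpow_mul (by norm_num : (0:ℝ) ≤ 2)]
      congr 1
      push_cast; ring
    rw [← e1]
    exact Real.rpow_le_rpow (by positivity) h8JR (by norm_num)
  have hr2 : (2*(v:ℝ)) * (1/2:ℝ)^J ≤ 2 * (2*(v:ℝ))^((2:ℝ)/3) := by
    have e2 : ((8:ℝ)^(J+1))^((1:ℝ)/3) = (2:ℝ)^(J+1) := by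
      have h1 : (8:ℝ)^(J+1) = (2:ℝ)^(3*(J+1)) := by rw [pow_mul]; norm_num
      rw [h1, ← Real.rpow_natCast (2:ℝ) (3*(J+1)), ← Real.rpow_natCast (2:ℝ) (J+1),
        ← Real.rpow_mul (by norm_num : (0:ℝ) ≤ 2)]
      congr 1
      push_cast; ring
    have h13 : (2*(v:ℝ))^((1:ℝ)/3) ≤ (2:ℝ)^(J+1) := by
      rw [← e2]
      exact Real.rpow_le_rpow (le_of_lt hWpos) (le_of_lt hltR) (by norm_num)
    have hsplit : (2*(v:ℝ)) = (2*(v:ℝ))^((2:ℝ)/3) * (2*(v:ℝ))^((1:ℝ)/3) := by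
      rw [← Real.rpow_add hWpos]
      norm_num
    calc (2*(v:ℝ)) * (1/2:ℝ)^J
        = ((2*(v:ℝ))^((2:ℝ)/3) * (2*(v:ℝ))^((1:ℝ)/3)) * (1/2)^J := by rw [← hsplit]
      _ = (2*(v:ℝ))^((2:ℝ)/3) * ((2*(v:ℝ))^((1:ℝ)/3) * (1/2)^J) := by ring
      _ ≤ (2*(v:ℝ))^((2:ℝ)/3) * ((2:ℝ)^(J+1) * (1/2)^J) := by
          apply mul_le_mul_of_nonneg_left ?_ hW23nn
          apply mul_le_mul_of_nonneg_right h13 (by positivity)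
      _ = 2 * (2*(v:ℝ))^((2:ℝ)/3) := by
          have hpow : (2:ℝ)^(J+1) * (1/2)^J = 2 := by
            rw [one_div, inv_pow, pow_succ]
            field_simp
          rw [hpow]; ring
  -- pointwise bounds
  have hAs : ∀ i, 1 ≤ i → i ≤ J → Ac v i ≤ 4 * Real.log 8 * (4^i * ((J:ℝ)+2-(i:ℝ))) := by
    intro i hi1 hiJ
    have hP8 : (0:ℝ) < 8^i := by positivity
    have h8i : (8:ℝ)^i ≤ 8^J := pow_le_pow_right₀ (by norm_num) hiJ
    have h8Jpos : (0:ℝ) < (8:ℝ)^J := by positivity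
    have hup : 1 + 8*(v:ℝ)/8^i ≤ (8:ℝ)^((J:ℝ)+2-(i:ℝ)) := by
      have hrw : (8:ℝ)^((J:ℝ)+2-(i:ℝ)) = (8:ℝ)^(J+2) / (8:ℝ)^i := by
        rw [Real.rpow_sub (by norm_num), ← Real.rpow_natCast (8:ℝ) (J+2),
          ← Real.rpow_natCast (8:ℝ) i]
        congr 2
        push_cast; ring
      rw [hrw, le_div_iff₀ hP8]
      have hexp : (1 + 8*(v:ℝ)/8^i) * 8^i = 8^i + 8*(v:ℝ) := by
        field_simp
      rw [hexp]
      have h642 : (8:ℝ)^(J+2) = 64 * 8^J := by rw [pow_add]; norm_num; ring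
      have h641 : (8:ℝ)^(J+1) = 8 * 8^J := by rw [pow_add]; norm_num; ring
      rw [h642]
      nlinarith [h8i, h8JR, hltR, h8Jpos, hvR]
    have hlog : Real.log (1 + 8*(v:ℝ)/8^i) ≤ ((J:ℝ)+2-(i:ℝ)) * Real.log 8 := by
      calc Real.log (1 + 8*(v:ℝ)/8^i) ≤ Real.log ((8:ℝ)^((J:ℝ)+2-(i:ℝ))) :=
            Real.log_le_log (by positivity) hup
        _ = ((J:ℝ)+2-(i:ℝ)) * Real.log 8 := Real.log_rpow (by norm_num) _
    unfold Ac
    calc 4 * 4^i * Real.log (1 + 8*(v:ℝ)/8^i)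
        ≤ 4 * 4^i * (((J:ℝ)+2-(i:ℝ)) * Real.log 8) := by
          apply mul_le_mul_of_nonneg_left hlog (by positivity)
      _ = 4 * Real.log 8 * (4^i * ((J:ℝ)+2-(i:ℝ))) := by ring
  have hAb : ∀ i : ℕ, Ac v i ≤ 16 * (2*(v:ℝ)) * (1/2)^i := by
    intro i
    have hP8 : (0:ℝ) < 8^i := by positivity
    have hlog : Real.log (1 + 8*(v:ℝ)/8^i) ≤ 8*(v:ℝ)/8^i := by
      have := Real.log_le_sub_one_of_pos (show (0:ℝ) < 1 + 8*(v:ℝ)/8^i by positivity)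
      linarith
    unfold Ac
    calc 4 * 4^i * Real.log (1 + 8*(v:ℝ)/8^i) ≤ 4 * 4^i * (8*(v:ℝ)/8^i) := by
          apply mul_le_mul_of_nonneg_left hlog (by positivity)
      _ = 16 * (2*(v:ℝ)) * ((4:ℝ)^i/(8:ℝ)^i) := by field_simp; ring
      _ = 16 * (2*(v:ℝ)) * (1/2)^i := by
          rw [← div_pow]
          norm_num
  have hBs : ∀ i : ℕ, Bc v i ≤ 8 * 4^i := by
    intro i
    have hP2 : (0:ℝ) < 2^i := by positivity
    have hlog : Real.log (1 + 8*8^i/(2*(v:ℝ))) ≤ 8*8^i/(2*(v:ℝ)) := by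
      have := Real.log_le_sub_one_of_pos (show (0:ℝ) < 1 + 8*8^i/(2*(v:ℝ)) by positivity)
      linarith
    unfold Bc
    calc (2*(v:ℝ)/2^i) * Real.log (1 + 8*8^i/(2*(v:ℝ)))
        ≤ (2*(v:ℝ)/2^i) * (8*8^i/(2*(v:ℝ))) := by
          apply mul_le_mul_of_nonneg_left hlog (by positivity)
      _ = 8 * ((8:ℝ)^i/(2:ℝ)^i) := by
          field_simp
      _ = 8 * 4^i := by
          rw [← div_pow]
          norm_num
  have hBb : ∀ i, J < i → Bc v i ≤ Real.log 8 * ((2*(v:ℝ)) * ((1/2)^i * ((i:ℝ)-(J:ℝ)+2))) := by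
    intro i hJi
    have hP2 : (0:ℝ) < 2^i := by positivity
    have h8Jpos : (0:ℝ) < (8:ℝ)^J := by positivity
    have hrw : (8:ℝ)^((i:ℝ)-(J:ℝ)) = (8:ℝ)^i / (8:ℝ)^J := by
      rw [Real.rpow_sub (by norm_num), Real.rpow_natCast, Real.rpow_natCast]
    have hge1 : (1:ℝ) ≤ (8:ℝ)^((i:ℝ)-(J:ℝ)) := by
      rw [hrw, le_div_iff₀ h8Jpos, one_mul]
      exact pow_le_pow_right₀ (by norm_num) (le_of_lt hJi)
    have h1 : 8 * (8:ℝ)^i / (2*(v:ℝ)) ≤ 8 * (8:ℝ)^((i:ℝ)-(J:ℝ)) := by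
      rw [hrw, ← mul_div_assoc]
      apply div_le_div_of_nonneg_left (by positivity) h8Jpos h8JR
    have hup : 1 + 8*(8:ℝ)^i/(2*(v:ℝ)) ≤ (8:ℝ)^((i:ℝ)-(J:ℝ)+2) := by
      have e : (8:ℝ)^((i:ℝ)-(J:ℝ)+2) = 64 * (8:ℝ)^((i:ℝ)-(J:ℝ)) := by
        rw [Real.rpow_add (by norm_num)]
        have : (8:ℝ)^(2:ℝ) = 64 := by
          rw [show (2:ℝ) = ((2:ℕ):ℝ) by norm_num, Real.rpow_natCast]
          norm_num
        rw [this]; ring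
      rw [e]
      linarith
    have hlog : Real.log (1 + 8*8^i/(2*(v:ℝ))) ≤ ((i:ℝ)-(J:ℝ)+2) * Real.log 8 := by
      calc Real.log (1 + 8*8^i/(2*(v:ℝ))) ≤ Real.log ((8:ℝ)^((i:ℝ)-(J:ℝ)+2)) :=
            Real.log_le_log (by positivity) hup
        _ = ((i:ℝ)-(J:ℝ)+2) * Real.log 8 := Real.log_rpow (by norm_num) _
    unfold Bc
    calc (2*(v:ℝ)/2^i) * Real.log (1 + 8*8^i/(2*(v:ℝ)))
        ≤ (2*(v:ℝ)/2^i) * (((i:ℝ)-(J:ℝ)+2) * Real.log 8) := by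
          apply mul_le_mul_of_nonneg_left hlog (by positivity)
      _ = Real.log 8 * ((2*(v:ℝ)) * ((1/2)^i * ((i:ℝ)-(J:ℝ)+2))) := by
          rw [one_div, inv_pow]
          field_simp
  -- sum the bounds
  rw [Finset.sum_add_distrib]
  have hAsum : ∑ i ∈ Finset.Icc 1 L, Ac v i
      ≤ 16 * Real.log 8 * 4^J + 16 * (2*(v:ℝ)) * (1/2)^J := by
    rw [← Finset.sum_filter_add_sum_filter_not (Finset.Icc 1 L) (fun i => i ≤ J)]
    have p1 : ∑ i ∈ (Finset.Icc 1 L).filter (fun i => i ≤ J), Ac v i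
        ≤ 16 * Real.log 8 * 4^J := by
      calc ∑ i ∈ (Finset.Icc 1 L).filter (fun i => i ≤ J), Ac v i
          ≤ ∑ i ∈ (Finset.Icc 1 L).filter (fun i => i ≤ J),
              4 * Real.log 8 * (4^i * ((J:ℝ)+2-(i:ℝ))) := by
            apply Finset.sum_le_sum
            intro i hi
            simp only [Finset.mem_filter, Finset.mem_Icc] at hi
            exact hAs i hi.1.1 hi.2
        _ ≤ ∑ i ∈ Finset.Icc 1 J, 4 * Real.log 8 * (4^i * ((J:ℝ)+2-(i:ℝ))) := by
            apply Finset.sum_le_sum_of_subset_of_nonneg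
            · intro i hi
              simp only [Finset.mem_filter, Finset.mem_Icc] at hi
              exact Finset.mem_Icc.mpr ⟨hi.1.1, hi.2⟩
            · intro i hi _
              have hi' := Finset.mem_Icc.mp hi
              have hiJ : (i:ℝ) ≤ (J:ℝ) := by exact_mod_cast hi'.2
              have hnn : (0:ℝ) ≤ (4:ℝ)^i * ((J:ℝ)+2-(i:ℝ)) := by
                apply mul_nonneg (by positivity)
                linarith
              exact mul_nonneg (mul_nonneg (by norm_num) hlog8nn) hnn
        _ = 4 * Real.log 8 * ∑ i ∈ Finset.Icc 1 J, (4^i * ((J:ℝ)+2-(i:ℝ))) := by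
            rw [Finset.mul_sum]
        _ ≤ 4 * Real.log 8 * (4 * 4^J) := by
            apply mul_le_mul_of_nonneg_left (RZ2.sum4 J) (mul_nonneg (by norm_num) hlog8nn)
        _ = 16 * Real.log 8 * 4^J := by ring
    have p2 : ∑ i ∈ (Finset.Icc 1 L).filter (fun i => ¬ i ≤ J), Ac v i
        ≤ 16 * (2*(v:ℝ)) * (1/2)^J := by
      calc ∑ i ∈ (Finset.Icc 1 L).filter (fun i => ¬ i ≤ J), Ac v i
          ≤ ∑ i ∈ (Finset.Icc 1 L).filter (fun i => ¬ i ≤ J), 16 * (2*(v:ℝ)) * (1/2)^i := by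
            apply Finset.sum_le_sum
            intro i _
            exact hAb i
        _ ≤ ∑ i ∈ Finset.Icc (J+1) (J + (L - J)), 16 * (2*(v:ℝ)) * (1/2)^i := by
            apply Finset.sum_le_sum_of_subset_of_nonneg
            · intro i hi
              simp only [Finset.mem_filter, Finset.mem_Icc] at hi
              exact Finset.mem_Icc.mpr ⟨by omega, by omega⟩
            · intro i _ _
              positivity
        _ = 16 * (2*(v:ℝ)) * ∑ i ∈ Finset.Icc (J+1) (J + (L-J)), (1/2:ℝ)^i := by
            rw [Finset.mul_sum]
        _ ≤ 16 * (2*(v:ℝ)) * (1/2)^J := by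
            apply mul_le_mul_of_nonneg_left ?_ (by positivity)
            have hg := RZ2.geo2' J (L - J)
            have hpos : (0:ℝ) ≤ (1/2:ℝ)^(J + (L-J)) := by positivity
            linarith
    linarith
  have hBsum : ∑ i ∈ Finset.Icc 1 L, Bc v i
      ≤ 8 * (4/3) * 4^J + 4 * Real.log 8 * ((2*(v:ℝ)) * (1/2)^J) := by
    rw [← Finset.sum_filter_add_sum_filter_not (Finset.Icc 1 L) (fun i => i ≤ J)]
    have p1 : ∑ i ∈ (Finset.Icc 1 L).filter (fun i => i ≤ J), Bc v i
        ≤ 8 * (4/3) * 4^J := by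
      calc ∑ i ∈ (Finset.Icc 1 L).filter (fun i => i ≤ J), Bc v i
          ≤ ∑ i ∈ (Finset.Icc 1 L).filter (fun i => i ≤ J), 8 * (4:ℝ)^i := by
            apply Finset.sum_le_sum
            intro i _
            exact hBs i
        _ ≤ ∑ i ∈ Finset.Icc 1 J, 8 * (4:ℝ)^i := by
            apply Finset.sum_le_sum_of_subset_of_nonneg
            · intro i hi
              simp only [Finset.mem_filter, Finset.mem_Icc] at hi
              exact Finset.mem_Icc.mpr ⟨hi.1.1, hi.2⟩
            · intro i _ _
              positivity
        _ = 8 * ∑ i ∈ Finset.Icc 1 J, (4:ℝ)^i := by rw [Finset.mul_sum]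
        _ ≤ 8 * ((4/3) * 4^J) := by
            apply mul_le_mul_of_nonneg_left (RZ2.geo4 J) (by norm_num)
        _ = 8 * (4/3) * 4^J := by ring
    have p2 : ∑ i ∈ (Finset.Icc 1 L).filter (fun i => ¬ i ≤ J), Bc v i
        ≤ 4 * Real.log 8 * ((2*(v:ℝ)) * (1/2)^J) := by
      calc ∑ i ∈ (Finset.Icc 1 L).filter (fun i => ¬ i ≤ J), Bc v i
          ≤ ∑ i ∈ (Finset.Icc 1 L).filter (fun i => ¬ i ≤ J),
              Real.log 8 * ((2*(v:ℝ)) * ((1/2)^i * ((i:ℝ)-(J:ℝ)+2))) := by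
            apply Finset.sum_le_sum
            intro i hi
            simp only [Finset.mem_filter, Finset.mem_Icc] at hi
            exact hBb i (by omega)
        _ ≤ ∑ i ∈ Finset.Icc (J+1) (J + (L-J)),
              Real.log 8 * ((2*(v:ℝ)) * ((1/2)^i * ((i:ℝ)-(J:ℝ)+2))) := by
            apply Finset.sum_le_sum_of_subset_of_nonneg
            · intro i hi
              simp only [Finset.mem_filter, Finset.mem_Icc] at hi
              exact Finset.mem_Icc.mpr ⟨by omega, by omega⟩
            · intro i hi _
              have hi' := Finset.mem_Icc.mp hi
              have : (J:ℝ) + 1 ≤ (i:ℝ) := by exact_mod_cast hi'.1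
              apply mul_nonneg hlog8nn
              apply mul_nonneg (le_of_lt hWpos)
              apply mul_nonneg (by positivity)
              linarith
        _ = Real.log 8 * (2*(v:ℝ)) *
              ∑ i ∈ Finset.Icc (J+1) (J + (L-J)), ((1/2:ℝ)^i * ((i:ℝ)-(J:ℝ)+2)) := by
            rw [Finset.mul_sum]
            apply Finset.sum_congr rfl
            intro i _
            ring
        _ ≤ Real.log 8 * (2*(v:ℝ)) * (4 * (1/2)^J) := by
            apply mul_le_mul_of_nonneg_left ?_ (mul_nonneg hlog8nn (le_of_lt hWpos))
            have hg := RZ2.geo3' J (L - J)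
            have hpos : (0:ℝ) ≤ (((L-J:ℕ):ℝ) + 4) * (1/2:ℝ)^(J + (L-J)) := by positivity
            linarith
        _ = 4 * Real.log 8 * ((2*(v:ℝ)) * (1/2)^J) := by ring
    linarith
  -- combine everything
  have c1 : 16 * Real.log 8 * 4^J ≤ 16 * 2.08 * (2*(v:ℝ))^((2:ℝ)/3) := by
    have h4Jnn : (0:ℝ) ≤ (4:ℝ)^J := by positivity
    nlinarith
  have c2 : 16 * (2*(v:ℝ)) * (1/2)^J ≤ 32 * (2*(v:ℝ))^((2:ℝ)/3) := by nlinarith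
  have c3 : 8 * (4/3) * (4:ℝ)^J ≤ 11 * (2*(v:ℝ))^((2:ℝ)/3) := by nlinarith
  have c4 : 4 * Real.log 8 * ((2*(v:ℝ)) * (1/2)^J) ≤ 4 * 2.08 * (2 * (2*(v:ℝ))^((2:ℝ)/3)) := by
    have hWhalf : (0:ℝ) ≤ (2*(v:ℝ)) * (1/2)^J := by positivity
    nlinarith
  linarith


lemma prod_le_exp (v : ℕ) (hv : 1 ≤ v) :
    ((∏ i ∈ Finset.Icc 1 (LL v), (mcl i + nb v i).choose (nb v i) : ℕ) : ℝ)
      ≤ Real.exp (100 * (2*(v:ℝ))^((2:ℝ)/3)) := by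
  rw [Nat.cast_prod]
  calc ∏ i ∈ Finset.Icc 1 (LL v), (((mcl i + nb v i).choose (nb v i) : ℕ) : ℝ)
      ≤ ∏ i ∈ Finset.Icc 1 (LL v), Real.exp (Ac v i + Bc v i) := by
        apply Finset.prod_le_prod
        · intro i _; positivity
        · intro i hi; exact cost_class v hv i hi
    _ = Real.exp (∑ i ∈ Finset.Icc 1 (LL v), (Ac v i + Bc v i)) := (Real.exp_sum _ _).symm
    _ ≤ Real.exp (100 * (2*(v:ℝ))^((2:ℝ)/3)) := Real.exp_le_exp.mpr (cost_sum v hv)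

end PPP


/-- `log N(v) = O(v^{2/3})`: there is a constant `C` with
`N(v) ≤ exp(C (v^{2/3} + 1))` for all `v ≥ 0`. -/
theorem numPP_le_exp_cbrt_sq :
    ∃ C : ℝ, ∀ v : ℕ, (numPP v : ℝ) ≤ Real.exp (C * ((v : ℝ) ^ ((2 : ℝ) / 3) + 1)) := by
  use 200
  intro v
  have hkey : numPP v = Nat.card (PPP.PPset v) := rfl
  have hnn : (0:ℝ) ≤ (v:ℝ) ^ ((2:ℝ)/3) := Real.rpow_nonneg (by positivity) _
  rcases Nat.eq_zero_or_pos v with rfl | hv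
  · have hb := PPP.numPP_le_prod 0
    have hL : PPP.LL 0 = 0 := by simp [PPP.LL]
    rw [hL] at hb
    have hempty : Finset.Icc 1 0 = (∅ : Finset ℕ) := by simp
    rw [hempty, Finset.prod_empty] at hb
    rw [hkey]
    have h1 : ((Nat.card (PPP.PPset 0)):ℝ) ≤ 1 := by exact_mod_cast hb
    refine le_trans h1 ?_
    rw [show (1:ℝ) = Real.exp 0 from (Real.exp_zero).symm]
    apply Real.exp_le_exp.mpr
    positivity
  · have hb := PPP.numPP_le_prod v
    have hbr : ((Nat.card (PPP.PPset v)):ℝ)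
        ≤ ((∏ i ∈ Finset.Icc 1 (PPP.LL v), (PPP.mcl i + PPP.nb v i).choose (PPP.nb v i) : ℕ) : ℝ) := by
      exact_mod_cast hb
    rw [hkey]
    refine le_trans hbr (le_trans (PPP.prod_le_exp v hv) (Real.exp_le_exp.mpr ?_))
    -- 100 * (2v)^(2/3) ≤ 200 * (v^(2/3) + 1)
    have hsplit : (2*(v:ℝ))^((2:ℝ)/3) = (2:ℝ)^((2:ℝ)/3) * (v:ℝ)^((2:ℝ)/3) :=
      Real.mul_rpow (by norm_num) (by positivity)
    have h2le : (2:ℝ)^((2:ℝ)/3) ≤ 2 := by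
      calc (2:ℝ)^((2:ℝ)/3) ≤ (2:ℝ)^(1:ℝ) :=
            Real.rpow_le_rpow_of_exponent_le (by norm_num) (by norm_num)
        _ = 2 := Real.rpow_one 2
    have : (2*(v:ℝ))^((2:ℝ)/3) ≤ 2 * (v:ℝ)^((2:ℝ)/3) := by
      rw [hsplit]
      exact mul_le_mul_of_nonneg_right h2le hnn
    nlinarith
end

section
/- Fix M ≥ 1 and partition the cube C_M = [0,M]³ into M³ unit cubes labeled by r = (r₁,r₂,r₃) ∈ {0,…,M−1}³. For η ∈ Ω^0_{M,2M} (M ordered lattice paths of length 2M from 0 to 0), define s(η) as the union of unit cubes r such that η^{(M−r₃)}(M−r₁+r₂) < M−r₁−r₂. Then s(η) is a monotone (downward-closed) subset of the cube: if r ∈ s(η) and r'ᵢ ≤ rᵢ for i = 1,2,3 (with r' ∈ {0,…,M−1}³), then r' ∈ s(η). -/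
/-- The unit cube labeled `r = (r₁,r₂,r₃)` belongs to the set `s(η)` associated to the
`M`-tuple of paths `η` (indexed `1,…,M`) iff `η^{(M-r₃)}(M-r₁+r₂) < M-r₁-r₂`. -/
def inCubeSet (M : ℕ) (η : ℕ → ℕ → ℤ) (r : ℕ × ℕ × ℕ) : Prop :=
  r.1 < M ∧ r.2.1 < M ∧ r.2.2 < M ∧
    η (M - r.2.2) (M - r.1 + r.2.1) < (M : ℤ) - (r.1 : ℤ) - (r.2.1 : ℤ)

/-- For a configuration of `M` ordered nearest-neighbor paths of length `2M` from `0` to `0`,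
the associated subset `s(η)` of the cube is monotone (downward-closed). -/
theorem cubeSet_monotone (M : ℕ) (hM : 1 ≤ M) (η : ℕ → ℕ → ℤ)
    (hstart : ∀ j : ℕ, 1 ≤ j → j ≤ M → η j 0 = 0)
    (hend : ∀ j : ℕ, 1 ≤ j → j ≤ M → η j (2 * M) = 0)
    (hstep : ∀ j : ℕ, 1 ≤ j → j ≤ M → ∀ x : ℕ, x < 2 * M →
      η j (x + 1) - η j x = 1 ∨ η j (x + 1) - η j x = -1)
    (horder : ∀ j : ℕ, 1 ≤ j → j + 1 ≤ M → ∀ x : ℕ, x ≤ 2 * M → η (j + 1) x ≤ η j x) :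
    ∀ r r' : ℕ × ℕ × ℕ, inCubeSet M η r →
      r'.1 ≤ r.1 → r'.2.1 ≤ r.2.1 → r'.2.2 ≤ r.2.2 → inCubeSet M η r' := by
  -- step bound in both directions
  have hstep' : ∀ j : ℕ, 1 ≤ j → j ≤ M → ∀ x : ℕ, x < 2 * M →
      η j (x + 1) ≤ η j x + 1 ∧ η j x ≤ η j (x + 1) + 1 := by
    intro j h1 h2 x hx
    rcases hstep j h1 h2 x hx with h | h <;> constructor <;> omega
  -- drop r₁ by one
  have d1 : ∀ a b c : ℕ, inCubeSet M η (a + 1, b, c) → inCubeSet M η (a, b, c) := by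
    intro a b c h
    simp only [inCubeSet] at h ⊢
    obtain ⟨ha, hb, hc, h⟩ := h
    refine ⟨by omega, hb, hc, ?_⟩
    have hx : M - a + b = (M - (a + 1) + b) + 1 := by omega
    rw [hx]
    have := (hstep' (M - c) (by omega) (by omega) (M - (a + 1) + b) (by omega)).1
    push_cast at h ⊢
    linarith
  -- drop r₂ by one
  have d2 : ∀ a b c : ℕ, inCubeSet M η (a, b + 1, c) → inCubeSet M η (a, b, c) := by
    intro a b c h
    simp only [inCubeSet] at h ⊢
    obtain ⟨ha, hb, hc, h⟩ := h
    refine ⟨ha, by omega, hc, ?_⟩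
    have hx : M - a + (b + 1) = (M - a + b) + 1 := by omega
    rw [hx] at h
    have := (hstep' (M - c) (by omega) (by omega) (M - a + b) (by omega)).2
    push_cast at h ⊢
    linarith
  -- drop r₃ by one
  have d3 : ∀ a b c : ℕ, inCubeSet M η (a, b, c + 1) → inCubeSet M η (a, b, c) := by
    intro a b c h
    simp only [inCubeSet] at h ⊢
    obtain ⟨ha, hb, hc, h⟩ := h
    refine ⟨ha, hb, by omega, ?_⟩
    have hj : M - c = (M - (c + 1)) + 1 := by omega
    rw [hj]
    have := horder (M - (c + 1)) (by omega) (by omega) (M - a + b) (by omega)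
    linarith
  -- iterate each drop
  have D1 : ∀ k a b c : ℕ, inCubeSet M η (a + k, b, c) → inCubeSet M η (a, b, c) := by
    intro k
    induction k with
    | zero => intro a b c h; exact h
    | succ n ih => intro a b c h; exact ih a b c (d1 (a + n) b c h)
  have D2 : ∀ k a b c : ℕ, inCubeSet M η (a, b + k, c) → inCubeSet M η (a, b, c) := by
    intro k
    induction k with
    | zero => intro a b c h; exact h
    | succ n ih => intro a b c h; exact ih a b c (d2 a (b + n) c h)
  have D3 : ∀ k a b c : ℕ, inCubeSet M η (a, b, c + k) → inCubeSet M η (a, b, c) := by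
    intro k
    induction k with
    | zero => intro a b c h; exact h
    | succ n ih => intro a b c h; exact ih a b c (d3 a b (c + n) h)
  rintro ⟨a, b, c⟩ ⟨a', b', c'⟩ h h1 h2 h3
  obtain ⟨k1, rfl⟩ := Nat.le.dest h1
  obtain ⟨k2, rfl⟩ := Nat.le.dest h2
  obtain ⟨k3, rfl⟩ := Nat.le.dest h3
  exact D1 k1 a' b' c' (D2 k2 (a' + k1) b' c' (D3 k3 (a' + k1) (b' + k2) c' h))
end
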